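/- arXiv:2203.16238 — 3 statements merged into one kernel-verified Lean document; each statement's English description precedes it below -/
import Mathlib

section
/- If a real sequence φ = (φ_k)_{0≤k≤2t} has a positive definite Hankel moment matrix M_t(φ) = (φ_{i+j})_{0≤i,j≤t}, then there exists a Borel measure ν on ℝ such that ∫ x^k dν = φ_k for all 0 ≤ k ≤ 2t (a truncated Hamburger moment sequence with positive definite Hankel matrix has a representing measure on the real line). -/
open MeasureTheory Matrix

noncomputable section

/-- The (Hankel) moment matrix `M_t(φ)` of a sequence `φ = (φ_k)`, with entries `φ_{i+j}`. -/
def hankel (t : ℕ) (φ : ℕ → ℝ) : Matrix (Fin (t + 1)) (Fin (t + 1)) ℝ :=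
  fun i j => φ ((i : ℕ) + (j : ℕ))

open Polynomial Filter Topology

set_option maxRecDepth 4000

lemma const_sos (c : ℝ) (hc : 0 ≤ c) {d : ℕ} :
    ∃ s : Multiset ℝ[X], (∀ q ∈ s, q.natDegree ≤ d) ∧ C c = (s.map (· ^ 2)).sum := by
  refine ⟨{C (Real.sqrt c)}, ?_, ?_⟩
  · intro q hq
    rw [Multiset.mem_singleton] at hq
    simp [hq]
  · simp [← C_pow, Real.sq_sqrt hc]

/-- A nonnegative real polynomial of degree at most `2d` is a sum of squares of
polynomials of degree at most `d`. -/
lemma sos_of_nonneg : ∀ (d : ℕ) (p : ℝ[X]), p.natDegree ≤ 2 * d → (∀ x, 0 ≤ p.eval x) →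
    ∃ s : Multiset ℝ[X], (∀ q ∈ s, q.natDegree ≤ d) ∧ p = (s.map (· ^ 2)).sum := by
  intro d
  induction d with
  | zero =>
    intro p hdeg hp
    rw [Nat.mul_zero, Nat.le_zero] at hdeg
    rw [eq_C_of_natDegree_eq_zero hdeg]
    exact const_sos _ (by rw [coeff_zero_eq_eval_zero]; exact hp 0)
  | succ d ih =>
    intro p hdeg hp
    by_cases h0 : p.natDegree = 0
    · rw [eq_C_of_natDegree_eq_zero h0]
      exact const_sos _ (by rw [coeff_zero_eq_eval_zero]; exact hp 0)
    -- global minimum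
    obtain ⟨x₀, hx₀⟩ := p.exists_forall_norm_le
    have hmin : ∀ y, p.eval x₀ ≤ p.eval y := by
      intro y
      have := hx₀ y
      rwa [Real.norm_eq_abs, Real.norm_eq_abs, abs_of_nonneg (hp x₀), abs_of_nonneg (hp y)] at this
    set m := p.eval x₀ with hm
    set q : ℝ[X] := p - C m with hqdef
    have hqeval : ∀ y, q.eval y = p.eval y - m := by intro y; simp [hqdef]
    have hqnonneg : ∀ y, 0 ≤ q.eval y := by
      intro y; rw [hqeval]; exact sub_nonneg.mpr (hmin y)
    have hq0 : q ≠ 0 := by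
      intro hq
      apply h0
      have : p = C m := by rwa [sub_eq_zero] at hq
      rw [this, natDegree_C]
    have hqx₀ : q.eval x₀ = 0 := by rw [hqeval]; ring
    obtain ⟨h1, hh1⟩ := (dvd_iff_isRoot.mpr hqx₀ : (X - C x₀) ∣ q)
    have h1cont : Continuous fun y => h1.eval y := h1.continuous
    have h1pos : ∀ y, x₀ < y → 0 ≤ h1.eval y := by
      intro y hy
      have hq := hqnonneg y
      rw [hh1] at hq
      simp only [eval_mul, eval_sub, eval_X, eval_C] at hq
      nlinarith
    have h1neg : ∀ y, y < x₀ → h1.eval y ≤ 0 := by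
      intro y hy
      have hq := hqnonneg y
      rw [hh1] at hq
      simp only [eval_mul, eval_sub, eval_X, eval_C] at hq
      nlinarith
    have h1x₀ : h1.eval x₀ = 0 := by
      have t1 : Filter.Tendsto (fun y => h1.eval y) (nhdsWithin x₀ (Set.Ioi x₀))
          (nhds (h1.eval x₀)) := (h1cont.tendsto x₀).mono_left nhdsWithin_le_nhds
      have t2 : Filter.Tendsto (fun y => h1.eval y) (nhdsWithin x₀ (Set.Iio x₀))
          (nhds (h1.eval x₀)) := (h1cont.tendsto x₀).mono_left nhdsWithin_le_nhds
      have g1 : 0 ≤ h1.eval x₀ :=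
        ge_of_tendsto t1 (eventually_nhdsWithin_of_forall fun y hy => h1pos y hy)
      have g2 : h1.eval x₀ ≤ 0 :=
        le_of_tendsto t2 (eventually_nhdsWithin_of_forall fun y hy => h1neg y hy)
      linarith
    obtain ⟨h2, hh2⟩ := (dvd_iff_isRoot.mpr h1x₀ : (X - C x₀) ∣ h1)
    have hq2 : q = (X - C x₀) ^ 2 * h2 := by rw [hh1, hh2]; ring
    have h2nonneg : ∀ y, 0 ≤ h2.eval y := by
      have hne : ∀ y, y ≠ x₀ → 0 ≤ h2.eval y := by
        intro y hy
        have hq := hqnonneg y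
        rw [hq2] at hq
        simp only [eval_mul, eval_pow, eval_sub, eval_X, eval_C] at hq
        have hyne : y - x₀ ≠ 0 := sub_ne_zero.mpr hy
        have hsq : 0 < (y - x₀) ^ 2 := by positivity
        nlinarith
      intro y
      rcases eq_or_ne y x₀ with rfl | hy
      · have t1 : Filter.Tendsto (fun z => h2.eval z) (nhdsWithin y (Set.Ioi y))
            (nhds (h2.eval y)) := (h2.continuous.tendsto y).mono_left nhdsWithin_le_nhds
        exact ge_of_tendsto t1 (eventually_nhdsWithin_of_forall fun z hz =>
          hne z (ne_of_gt hz))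
      · exact hne y hy
    have h2ne : h2 ≠ 0 := by
      intro hc; rw [hc, mul_zero] at hq2; exact hq0 hq2
    have hdeg2 : h2.natDegree ≤ 2 * d := by
      have hdq : q.natDegree ≤ 2 * (d + 1) := by
        rw [hqdef, natDegree_sub_C]; exact hdeg
      have hXne : ((X : ℝ[X]) - C x₀) ^ 2 ≠ 0 := pow_ne_zero _ (X_sub_C_ne_zero x₀)
      have := natDegree_mul hXne h2ne
      rw [← hq2] at this
      have hXdeg : (((X : ℝ[X]) - C x₀) ^ 2).natDegree = 2 := by
        rw [natDegree_pow, natDegree_X_sub_C]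
      omega
    obtain ⟨s, hsdeg, hssum⟩ := ih h2 hdeg2 h2nonneg
    refine ⟨(s.map (fun r => (X - C x₀) * r)) + {C (Real.sqrt m)}, ?_, ?_⟩
    · intro r hr
      rw [Multiset.mem_add] at hr
      rcases hr with hr | hr
      · obtain ⟨r', hr', rfl⟩ := Multiset.mem_map.mp hr
        calc ((X - C x₀) * r').natDegree ≤ (X - C x₀).natDegree + r'.natDegree :=
              natDegree_mul_le
          _ ≤ 1 + d := by rw [natDegree_X_sub_C]; exact Nat.add_le_add_left (hsdeg r' hr') 1
          _ = d + 1 := by omega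
      · rw [Multiset.mem_singleton] at hr
        simp [hr]
    · have hpm : p = q + C m := by rw [hqdef]; ring
      rw [hpm, hq2, hssum]
      rw [Multiset.map_add, Multiset.sum_add, Multiset.map_map]
      congr 1
      · rw [show ((fun x => x ^ 2) ∘ fun r => (X - C x₀) * r)
            = (fun r : ℝ[X] => (X - C x₀) ^ 2 * r ^ 2) from funext fun r => by simp [mul_pow]]
        rw [Multiset.sum_map_mul_left]
      · simp [← C_pow, Real.sq_sqrt (show 0 ≤ m from hp x₀), -map_pow]

/-- The moment functional associated with a sequence `φ`. -/
noncomputable def momL (φ : ℕ → ℝ) : ℝ[X] →ₗ[ℝ] ℝ :=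
  Polynomial.lsum (fun k => φ k • LinearMap.id)

lemma momL_monomial (φ : ℕ → ℝ) (n : ℕ) (a : ℝ) : momL φ (monomial n a) = a * φ n := by
  simp [momL, Polynomial.lsum_apply, Polynomial.sum_monomial_index, mul_comm]

lemma momL_C (φ : ℕ → ℝ) (c : ℝ) : momL φ (C c) = c * φ 0 := by
  rw [← monomial_zero_left]; exact momL_monomial φ 0 c

lemma momL_mul (φ : ℕ → ℝ) (s r : ℝ[X]) {n m : ℕ} (hs : s.natDegree < n) (hr : r.natDegree < m) :
    momL φ (s * r) = ∑ i ∈ Finset.range n, ∑ j ∈ Finset.range m,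
      s.coeff i * r.coeff j * φ (i + j) := by
  conv_lhs => rw [s.as_sum_range' n hs, r.as_sum_range' m hr]
  rw [Finset.sum_mul_sum]
  rw [map_sum]
  refine Finset.sum_congr rfl fun i _ => ?_
  rw [map_sum]
  refine Finset.sum_congr rfl fun j _ => ?_
  rw [monomial_mul_monomial, momL_monomial]

open Matrix in
lemma momL_sq_pos {t : ℕ} {φ : ℕ → ℝ} (h : (hankel t φ).PosDef) {s : ℝ[X]} (hs : s ≠ 0)
    (hdeg : s.natDegree ≤ t) : 0 < momL φ (s * s) := by
  set c : Fin (t + 1) → ℝ := fun i => s.coeff i with hc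
  have hcne : c ≠ 0 := by
    intro hzero
    apply hs
    have h1 : s.coeff s.natDegree = 0 := by
      have := congrFun hzero ⟨s.natDegree, Nat.lt_succ_of_le hdeg⟩
      simpa [hc] using this
    exact leadingCoeff_eq_zero.mp h1
  have hpos := h.dotProduct_mulVec_pos hcne
  rw [star_trivial] at hpos
  rw [momL_mul φ s s (Nat.lt_succ_of_le hdeg) (Nat.lt_succ_of_le hdeg)]
  have : dotProduct c ((hankel t φ) *ᵥ c) = ∑ i ∈ Finset.range (t + 1),
      ∑ j ∈ Finset.range (t + 1), s.coeff i * s.coeff j * φ (i + j) := by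
    rw [dotProduct, ← Fin.sum_univ_eq_sum_range]
    refine Finset.sum_congr rfl fun i _ => ?_
    rw [mulVec, dotProduct, Finset.mul_sum, ← Fin.sum_univ_eq_sum_range]
    refine Finset.sum_congr rfl fun j _ => ?_
    simp only [hankel, hc]
    ring
  rw [← this]
  exact hpos

/-- The moment curve `x ↦ (x, x², …, xⁿ)` in `ℝⁿ`. -/
noncomputable def curve (n : ℕ) : ℝ → EuclideanSpace ℝ (Fin n) := fun x => WithLp.toLp 2 (fun k => x ^ ((k : ℕ) + 1))

lemma curve_zero (n : ℕ) : curve n 0 = 0 := by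
  ext k
  simp [curve]

lemma coeff_curvepoly (n : ℕ) (w : Fin n → ℝ) (j : Fin n) :
    (∑ k : Fin n, C (w k) * X ^ ((k : ℕ) + 1)).coeff ((j : ℕ) + 1) = w j := by
  rw [finset_sum_coeff]
  rw [Finset.sum_eq_single j]
  · simp
  · intro k _ hk
    have : (k : ℕ) + 1 ≠ (j : ℕ) + 1 := by
      simp only [ne_eq, Nat.add_right_cancel_iff]
      exact fun hkj => hk (Fin.val_injective hkj)
    simp only [coeff_C_mul, coeff_X_pow, if_neg (fun hh : (j:ℕ)+1 = (k:ℕ)+1 => this hh.symm),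
      mul_zero]
  · simp

lemma curve_span (n : ℕ) : Submodule.span ℝ (Set.range (curve n)) = ⊤ := by
  rw [← Submodule.orthogonal_eq_bot_iff, Submodule.eq_bot_iff]
  intro w hw
  have hworth : ∀ x : ℝ, (inner ℝ (curve n x) w : ℝ) = 0 := fun x =>
    (Submodule.mem_orthogonal _ w).mp hw _ (Submodule.subset_span (Set.mem_range_self x))
  set P : ℝ[X] := ∑ k : Fin n, C (w k) * X ^ ((k : ℕ) + 1) with hP
  have hPeval : ∀ x : ℝ, P.eval x = inner ℝ (curve n x) w := by
    intro x
    rw [hP, eval_finset_sum]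
    simp only [eval_mul, eval_C, eval_pow, eval_X]
    rw [PiLp.inner_apply]
    simp [curve, RCLike.inner_apply, mul_comm]
  have hP0 : P = 0 := by
    apply Polynomial.funext
    intro x
    rw [hPeval, hworth, eval_zero]
  ext j
  have := coeff_curvepoly n w j
  rw [← hP, hP0] at this
  simpa using this.symm

lemma interior_hull_nonempty (n : ℕ) :
    (interior (convexHull ℝ (Set.range (curve n)))).Nonempty := by
  rw [Convex.interior_nonempty_iff_affineSpan_eq_top (convex_convexHull ℝ _)]
  rw [affineSpan_convexHull]
  rw [AffineSubspace.affineSpan_eq_top_iff_vectorSpan_eq_top_of_nonempty ℝ _ _ (Set.range_nonempty (curve n))]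
  rw [eq_top_iff, ← curve_span n]
  rw [Submodule.span_le]
  rintro - ⟨x, rfl⟩
  have hmem : curve n x -ᵥ curve n 0 ∈ Set.range (curve n) -ᵥ Set.range (curve n) :=
    Set.vsub_mem_vsub (Set.mem_range_self x) (Set.mem_range_self 0)
  rw [curve_zero, vsub_eq_sub, sub_zero] at hmem
  exact Submodule.subset_span hmem

open Matrix in
lemma phi0_pos {t : ℕ} {φ : ℕ → ℝ} (h : (hankel t φ).PosDef) : 0 < φ 0 := by
  have hx : (Pi.single 0 1 : Fin (t + 1) → ℝ) ≠ 0 := by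
    intro hc
    have := congrFun hc 0
    simp at this
  have hpos := h.dotProduct_mulVec_pos hx
  rw [star_trivial] at hpos
  have : dotProduct (Pi.single 0 1 : Fin (t + 1) → ℝ) ((hankel t φ) *ᵥ Pi.single 0 1) = φ 0 := by
    rw [dotProduct]
    rw [Finset.sum_eq_single 0]
    · simp [mulVec, dotProduct, hankel, Pi.single_apply]
    · intro b _ hb
      simp [Pi.single_apply, hb]
    · simp
  rwa [this] at hpos

lemma mem_hull {t : ℕ} {φ : ℕ → ℝ} (h : (hankel t φ).PosDef) :
    WithLp.toLp 2 (fun k : Fin (2 * t) => φ ((k : ℕ) + 1) / φ 0) ∈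
      convexHull ℝ (Set.range (curve (2 * t))) := by
  have hφ0 : 0 < φ 0 := phi0_pos h
  set n := 2 * t with hn
  set p : EuclideanSpace ℝ (Fin n) := WithLp.toLp 2 (fun k : Fin n => φ ((k : ℕ) + 1) / φ 0) with hpdef
  set V := Set.range (curve n) with hV
  set S := convexHull ℝ V with hS
  by_contra hnot
  have hSconv : Convex ℝ S := convex_convexHull ℝ V
  obtain ⟨y₀, hy₀⟩ := interior_hull_nonempty n
  have hpint : p ∉ interior S := fun hp => hnot (interior_subset hp)
  obtain ⟨f, hf⟩ := geometric_hahn_banach_open_point hSconv.interior isOpen_interior hpint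
  have hfle : ∀ y ∈ S, f y ≤ f p := by
    intro y hy
    have key : ∀ θ : ℝ, θ ∈ Set.Ioc (0 : ℝ) 1 → f (y + θ • (y₀ - y)) < f p := fun θ hθ =>
      hf _ (hSconv.add_smul_sub_mem_interior hy hy₀ hθ)
    have hcont : Continuous fun θ : ℝ => f (y + θ • (y₀ - y)) :=
      f.continuous.comp (continuous_const.add (continuous_id.smul continuous_const))
    have htend : Filter.Tendsto (fun θ : ℝ => f (y + θ • (y₀ - y)))
        (nhdsWithin 0 (Set.Ioi 0)) (nhds (f y)) := by
      have hbase := (hcont.tendsto 0).mono_left (nhdsWithin_le_nhds (s := Set.Ioi (0:ℝ)))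
      have h00 : y + (0:ℝ) • (y₀ - y) = y := by rw [zero_smul, add_zero]
      rw [h00] at hbase
      exact hbase
    refine le_of_tendsto htend ?_
    filter_upwards [Ioc_mem_nhdsGT_of_mem (Set.mem_Ico.mpr ⟨le_refl _, zero_lt_one⟩)] with θ hθ
    exact (key θ hθ).le
  set a : Fin n → ℝ := fun k => f (EuclideanSpace.single k 1) with ha
  have hfy : ∀ y : EuclideanSpace ℝ (Fin n), f y = ∑ k, y k * a k := by
    intro y
    conv_lhs => rw [← (EuclideanSpace.basisFun (Fin n) ℝ).sum_repr y]
    rw [map_sum]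
    refine Finset.sum_congr rfl fun k _ => ?_
    rw [_root_.map_smul]
    simp [EuclideanSpace.basisFun_apply, EuclideanSpace.basisFun_repr, ha, smul_eq_mul]
  set Q : ℝ[X] := C (f p) - ∑ k : Fin n, C (a k) * X ^ ((k : ℕ) + 1) with hQ
  have hQeval : ∀ x : ℝ, Q.eval x = f p - f (curve n x) := by
    intro x
    rw [hQ, eval_sub, eval_C, eval_finset_sum, hfy (curve n x)]
    congr 1
    refine Finset.sum_congr rfl fun k _ => ?_
    rw [eval_mul, eval_C, eval_pow, eval_X, show curve n x k = x ^ ((k : ℕ) + 1) from rfl]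
    ring
  have hQnonneg : ∀ x : ℝ, 0 ≤ Q.eval x := fun x => by
    rw [hQeval]
    exact sub_nonneg.mpr (hfle _ (subset_convexHull ℝ V (Set.mem_range_self x)))
  have hQdeg : Q.natDegree ≤ 2 * t := by
    refine le_trans (natDegree_sub_le _ _) (max_le (by simp) ?_)
    refine natDegree_sum_le_of_forall_le _ _ fun k _ => ?_
    refine le_trans (natDegree_C_mul_le _ _) ?_
    rw [natDegree_X_pow]
    omega
  have hLQ : momL φ Q = 0 := by
    rw [hQ, map_sub, momL_C, map_sum]
    have hterm : ∀ k : Fin n, momL φ (C (a k) * X ^ ((k : ℕ) + 1)) = a k * φ ((k : ℕ) + 1) := by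
      intro k
      rw [C_mul_X_pow_eq_monomial, momL_monomial]
    rw [Finset.sum_congr rfl fun k _ => hterm k, hfy p, Finset.sum_mul, sub_eq_zero]
    refine Finset.sum_congr rfl fun k _ => ?_
    rw [hpdef]
    field_simp
  obtain ⟨s, hsdeg, hssum⟩ := sos_of_nonneg t Q hQdeg hQnonneg
  have hzero : ∀ r ∈ s, r = 0 := by
    by_contra hex
    push_neg at hex
    obtain ⟨r, hr, hrne⟩ := hex
    have hsum : momL φ Q = ((s.map (· ^ 2)).map (momL φ)).sum := by
      rw [hssum, map_multiset_sum]
    rw [Multiset.map_map] at hsum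
    simp only [Function.comp_def] at hsum
    have hpos : 0 < momL φ (r ^ 2) := by
      rw [pow_two]
      exact momL_sq_pos h hrne (hsdeg r hr)
    have hle : momL φ (r ^ 2) ≤ (s.map fun r => momL φ (r ^ 2)).sum := by
      refine Multiset.single_le_sum ?_ _ (Multiset.mem_map_of_mem _ hr)
      intro x hx
      obtain ⟨r', hr', rfl⟩ := Multiset.mem_map.mp hx
      rcases eq_or_ne r' 0 with rfl | hr'ne
      · simp
      · rw [pow_two]
        exact (momL_sq_pos h hr'ne (hsdeg r' hr')).le
    rw [hLQ] at hsum
    have : (0:ℝ) < (s.map fun r => momL φ (r ^ 2)).sum := lt_of_lt_of_le hpos hle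
    rw [← hsum] at this
    exact lt_irrefl 0 this
  have hQ0 : Q = 0 := by
    rw [hssum]
    apply Multiset.sum_eq_zero
    intro x hx
    obtain ⟨r', hr', rfl⟩ := Multiset.mem_map.mp hx
    rw [hzero r' hr']
    simp
  have hacoeff : ∀ j : Fin n, a j = 0 := by
    intro j
    have h1 : Q.coeff ((j : ℕ) + 1) = 0 := by rw [hQ0]; simp
    rw [hQ, coeff_sub, coeff_C, coeff_curvepoly] at h1
    simpa using h1
  have hfp0 : f p = 0 := by
    rw [hfy p]
    simp [hacoeff]
  have hy₀lt : f y₀ < f p := hf y₀ hy₀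
  rw [hfy y₀, hfp0] at hy₀lt
  simp [hacoeff] at hy₀lt

/-- A truncated Hamburger moment sequence `(φ_k)_{k ≤ 2t}` whose Hankel moment matrix
`M_t(φ) = (φ_{i+j})_{0 ≤ i,j ≤ t}` is positive definite has a representing Borel measure
on the real line: there is a Borel measure `ν` on `ℝ` with `∫ x^k dν = φ_k` for all
`0 ≤ k ≤ 2t`. -/
theorem stmt2 (t : ℕ) (φ : ℕ → ℝ) (h : (hankel t φ).PosDef) :
    ∃ ν : Measure ℝ, ∀ k ≤ 2 * t,
      Integrable (fun x : ℝ => x ^ k) ν ∧ ∫ x, x ^ k ∂ν = φ k := by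
  classical
  have hφ0 : 0 < φ 0 := phi0_pos h
  have hmem := mem_hull h
  rw [convexHull_eq] at hmem
  obtain ⟨ι, tset, w, z, hw0, hw1, hz, hcm⟩ := hmem
  rw [Finset.centerMass_eq_of_sum_1 _ _ hw1] at hcm
  set ξ : ι → ℝ := fun i => if hex : ∃ x, curve (2 * t) x = z i then hex.choose else 0 with hξdef
  have hξ : ∀ i ∈ tset, curve (2 * t) (ξ i) = z i := by
    intro i hi
    have hex : ∃ x, curve (2 * t) x = z i := hz i hi
    simp only [hξdef, dif_pos hex]
    exact hex.choose_spec
  set ν : Measure ℝ := ∑ i ∈ tset, (ENNReal.ofReal (φ 0 * w i)) • Measure.dirac (ξ i) with hν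
  have hint : ∀ (k : ℕ), ∀ i ∈ tset, Integrable (fun x : ℝ => x ^ k)
      ((ENNReal.ofReal (φ 0 * w i)) • Measure.dirac (ξ i)) := by
    intro k i _
    refine Integrable.smul_measure ?_ ENNReal.ofReal_ne_top
    exact (integrable_const _).congr (ae_eq_dirac (fun x : ℝ => x ^ k)).symm
  refine ⟨ν, fun k hk => ⟨?_, ?_⟩⟩
  · rw [hν]
    exact integrable_finset_sum_measure.mpr (hint k)
  · rw [hν, integral_finset_sum_measure (hint k)]
    have hterm : ∀ i ∈ tset, ∫ x, x ^ k ∂((ENNReal.ofReal (φ 0 * w i)) • Measure.dirac (ξ i))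
        = φ 0 * w i * ξ i ^ k := by
      intro i hi
      rw [integral_smul_measure, integral_dirac,
        ENNReal.toReal_ofReal (mul_nonneg hφ0.le (hw0 i hi)), smul_eq_mul]
    rw [Finset.sum_congr rfl hterm]
    rcases Nat.eq_zero_or_pos k with rfl | hkpos
    · simp only [pow_zero, mul_one]
      rw [← Finset.mul_sum, hw1, mul_one]
    · obtain ⟨j, rfl⟩ : ∃ j, k = j + 1 := ⟨k - 1, by omega⟩
      have hj : j < 2 * t := by omega
      have h1 := congrArg (EuclideanSpace.proj (⟨j, hj⟩ : Fin (2 * t))) hcm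
      rw [map_sum] at h1
      simp only [_root_.map_smul, smul_eq_mul] at h1
      have hproj : ∀ (y : EuclideanSpace ℝ (Fin (2 * t))),
          (EuclideanSpace.proj (⟨j, hj⟩ : Fin (2 * t))) y = y ⟨j, hj⟩ := fun y => rfl
      simp only [hproj] at h1
      have h3 : ∀ i ∈ tset, w i * z i ⟨j, hj⟩ = w i * ξ i ^ (j + 1) := by
        intro i hi
        rw [← hξ i hi]
        rfl
      rw [Finset.sum_congr rfl h3] at h1
      calc ∑ i ∈ tset, φ 0 * w i * ξ i ^ (j + 1)
          = φ 0 * ∑ i ∈ tset, w i * ξ i ^ (j + 1) := by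
            rw [Finset.mul_sum]
            exact Finset.sum_congr rfl fun i _ => by ring
        _ = φ 0 * (φ (j + 1) / φ 0) := by rw [h1]
        _ = φ (j + 1) := by field_simp
end
end

section
/- Let μ be a Borel measure on a compact set X×Y ⊂ ℝⁿ×ℝᵖ with marginal φ on X, and assume M_t(μ) is positive definite for all t. Let (P_{α,β})_{(α,β)∈ℕ^{n+p}_t} ⊂ ℝ[x,y]_t be a family of polynomials orthonormal with respect to μ, forming a basis of ℝ[x,y]_t, and such that the polynomials P_{α,0}, α ∈ ℕⁿ_t, involve only the variables x and are orthonormal with respect to φ. Then for all (x,y) ∈ ℝⁿ×ℝᵖ: Λ^μ_t(x,y)^{-1} = Λ^φ_t(x)^{-1} + Σ_{(α,β)∈ℕ^{n+p}_t, |β|≥1} P_{α,β}(x,y)². -/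
open MeasureTheory Matrix

noncomputable section

/-- Multi-indices `α ∈ ℕⁿ` with `|α| ≤ t`, encoded with entries in `Fin (t+1)`. -/
def MIdx (n t : ℕ) : Type :=
  {α : Fin n → Fin (t + 1) // (∑ i, ((α i : ℕ))) ≤ t}

instance (n t : ℕ) : Fintype (MIdx n t) := by unfold MIdx; infer_instance

instance (n t : ℕ) : DecidableEq (MIdx n t) := by unfold MIdx; infer_instance

/-- The monomial `x^α`. -/
def mon {n t : ℕ} (x : Fin n → ℝ) (α : MIdx n t) : ℝ :=
  ∏ i, x i ^ ((α.1 i : ℕ))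

/-- Joint multi-indices `(α, β) ∈ ℕⁿ × ℕᵖ` with `|α| + |β| ≤ t`. -/
def JIdx (n p t : ℕ) : Type :=
  {ab : (Fin n → Fin (t + 1)) × (Fin p → Fin (t + 1)) //
    (∑ i, ((ab.1 i : ℕ))) + (∑ j, ((ab.2 j : ℕ))) ≤ t}

instance (n p t : ℕ) : Fintype (JIdx n p t) := by unfold JIdx; infer_instance

instance (n p t : ℕ) : DecidableEq (JIdx n p t) := by unfold JIdx; infer_instance

/-- The monomial `x^α y^β`. -/
def mon2 {n p t : ℕ} (x : Fin n → ℝ) (y : Fin p → ℝ) (γ : JIdx n p t) : ℝ :=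
  (∏ i, x i ^ ((γ.1.1 i : ℕ))) * ∏ j, y j ^ ((γ.1.2 j : ℕ))

/-- Evaluation at `(x,y)` of the polynomial in `ℝ[x,y]_t` with coefficient vector `c`. -/
def eval2 {n p t : ℕ} (c : JIdx n p t → ℝ) (x : Fin n → ℝ) (y : Fin p → ℝ) : ℝ :=
  ∑ γ, c γ * mon2 x y γ

/-- The moment matrix `M_t(μ)` of a measure `μ` on `ℝⁿ × ℝᵖ`. -/
def momMat2 (n p t : ℕ) (μ : Measure ((Fin n → ℝ) × (Fin p → ℝ))) :
    Matrix (JIdx n p t) (JIdx n p t) ℝ :=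
  fun γ δ => ∫ z, mon2 z.1 z.2 γ * mon2 z.1 z.2 δ ∂μ

/-- The moment matrix `M_t(φ)` of a measure `φ` on `ℝⁿ`. -/
def momMatX (n t : ℕ) (φ : Measure (Fin n → ℝ)) : Matrix (MIdx n t) (MIdx n t) ℝ :=
  fun α β => ∫ x, mon x α * mon x β ∂φ


/-! ### Auxiliary lemmas -/

lemma matrix_key {ι : Type*} [Fintype ι] [DecidableEq ι] (M A : Matrix ι ι ℝ)
    (h : A * M * Aᵀ = 1) (v : ι → ℝ) :
    v ⬝ᵥ M⁻¹.mulVec v = ∑ γ, (A.mulVec v γ)^2 := by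
  have h2 : A * (M * Aᵀ) = 1 := by rw [← Matrix.mul_assoc]; exact h
  have h3 : (M * Aᵀ) * A = 1 := mul_eq_one_comm.mp h2
  have h1 : M * (Aᵀ * A) = 1 := by rwa [Matrix.mul_assoc] at h3
  rw [Matrix.inv_eq_right_inv h1, ← Matrix.mulVec_mulVec, Matrix.dotProduct_mulVec,
    Matrix.vecMul_transpose]
  simp [dotProduct, sq]

lemma integrable_of_cont {E : Type*} [MeasurableSpace E] [TopologicalSpace E]
    [OpensMeasurableSpace E] (μ : Measure E) [IsFiniteMeasure μ] {K : Set E}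
    (hK : IsCompact K) (h0 : μ Kᶜ = 0) {f : E → ℝ} (hf : Continuous f) :
    Integrable f μ := by
  obtain ⟨C, hC⟩ := hK.exists_bound_of_continuousOn hf.continuousOn
  refine Integrable.mono' (integrable_const C) hf.aestronglyMeasurable ?_
  have hae : ∀ᵐ z ∂μ, z ∈ K := by rw [ae_iff]; exact h0
  filter_upwards [hae] with z hz
  exact hC z hz

lemma expand {E : Type*} [MeasurableSpace E] (ν : Measure E) {ι : Type*} [Fintype ι]
    (w : E → ι → ℝ) (hint : ∀ i j, Integrable (fun e => w e i * w e j) ν) (c d : ι → ℝ) :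
    ∫ e, (∑ i, c i * w e i) * (∑ j, d j * w e j) ∂ν
      = ∑ i, ∑ j, c i * d j * ∫ e, w e i * w e j ∂ν := by
  have he : ∀ e, (∑ i, c i * w e i) * (∑ j, d j * w e j)
      = ∑ i, ∑ j, (c i * d j) * (w e i * w e j) := by
    intro e
    rw [Finset.sum_mul_sum]
    exact Finset.sum_congr rfl fun i _ => Finset.sum_congr rfl fun j _ => by ring
  simp_rw [he]
  rw [integral_finset_sum _ (fun i _ =>
    integrable_finset_sum _ fun j _ => (hint i j).const_mul _)]
  refine Finset.sum_congr rfl fun i _ => ?_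
  rw [integral_finset_sum _ (fun j _ => (hint i j).const_mul _)]
  exact Finset.sum_congr rfl fun j _ => integral_const_mul _ _

def emb {n p t : ℕ} (α : MIdx n t) : JIdx n p t := ⟨(α.1, 0), by simpa using α.2⟩

lemma emb_inj {n p t : ℕ} : Function.Injective (emb (n := n) (p := p) (t := t)) := by
  intro a b h
  exact Subtype.ext (congrArg (fun z => z.1.1) h)

lemma sum_beta_zero {n p t : ℕ} (f : JIdx n p t → ℝ) :
    ∑ γ ∈ Finset.univ.filter (fun γ : JIdx n p t => γ.1.2 = 0), f γ
      = ∑ α : MIdx n t, f (emb α) := by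
  refine Finset.sum_bij' (fun γ hγ => (⟨γ.1.1, ?_⟩ : MIdx n t)) (fun α _ => emb α)
    ?_ ?_ ?_ ?_ ?_
  · exact le_trans (Nat.le_add_right _ _) γ.2
  · intro γ hγ; exact Finset.mem_univ _
  · intro α hα
    simp only [Finset.mem_filter, Finset.mem_univ, true_and]
    rfl
  · intro γ hγ
    simp only [Finset.mem_filter, Finset.mem_univ, true_and] at hγ
    exact Subtype.ext (Prod.ext rfl hγ.symm)
  · intro α hα; rfl
  · intro γ hγ
    simp only [Finset.mem_filter, Finset.mem_univ, true_and] at hγ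
    exact congrArg f (Subtype.ext (Prod.ext rfl hγ))

lemma mon2_emb {n p t : ℕ} (x : Fin n → ℝ) (y : Fin p → ℝ) (α : MIdx n t) :
    mon2 x y (emb α) = mon x α := by
  simp [mon2, mon, emb]

lemma eval2_restrict {n p t : ℕ} (c : JIdx n p t → ℝ) (hc : ∀ δ, c δ ≠ 0 → δ.1.2 = 0)
    (x : Fin n → ℝ) (y : Fin p → ℝ) :
    eval2 c x y = ∑ α : MIdx n t, c (emb α) * mon x α := by
  unfold eval2
  rw [← Finset.sum_filter_of_ne (p := fun δ : JIdx n p t => δ.1.2 = 0)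
    (fun δ _ h => hc δ (left_ne_zero_of_mul h)),
    sum_beta_zero (fun γ => c γ * mon2 x y γ)]
  exact Finset.sum_congr rfl fun α _ => by rw [mon2_emb]

lemma mon_cont {n t : ℕ} (α : MIdx n t) : Continuous fun x : Fin n → ℝ => mon x α := by
  unfold mon
  exact continuous_finset_prod _ fun i _ => (continuous_apply i).pow _

lemma mon2_cont {n p t : ℕ} (γ : JIdx n p t) :
    Continuous fun z : (Fin n → ℝ) × (Fin p → ℝ) => mon2 z.1 z.2 γ := by
  unfold mon2
  exact (continuous_finset_prod _ fun i _ =>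
      ((continuous_apply i).comp continuous_fst).pow _).mul
    (continuous_finset_prod _ fun j _ =>
      ((continuous_apply j).comp continuous_snd).pow _)

/-- Let `μ` be a Borel measure on a compact set `X × Y ⊆ ℝⁿ × ℝᵖ` with positive definite
moment matrices, `φ` its marginal on `X`, and `(P_{α,β})` a family of polynomials in
`ℝ[x,y]_t` orthonormal with respect to `μ`, forming a basis of `ℝ[x,y]_t`, such that the
`P_{α,0}` involve only the variables `x` and are orthonormal with respect to `φ`.
Then for all `(x,y)`:
`Λ^μ_t(x,y)⁻¹ = Λ^φ_t(x)⁻¹ + Σ_{|β| ≥ 1} P_{α,β}(x,y)²`. -/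
theorem stmt5 (n p t : ℕ) (X : Set (Fin n → ℝ)) (Y : Set (Fin p → ℝ))
    (hX : IsCompact X) (hY : IsCompact Y)
    (μ : Measure ((Fin n → ℝ) × (Fin p → ℝ))) [IsFiniteMeasure μ]
    (hsupp : μ (X ×ˢ Y)ᶜ = 0)
    (hPD : ∀ s : ℕ, (momMat2 n p s μ).PosDef)
    (P : JIdx n p t → (JIdx n p t → ℝ))
    (horth : ∀ γ δ : JIdx n p t,
      ∫ z, eval2 (P γ) z.1 z.2 * eval2 (P δ) z.1 z.2 ∂μ = if γ = δ then 1 else 0)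
    (hindep : LinearIndependent ℝ P)
    (hspan : Submodule.span ℝ (Set.range P) = ⊤)
    (honlyx : ∀ γ : JIdx n p t, γ.1.2 = 0 → ∀ δ : JIdx n p t, P γ δ ≠ 0 → δ.1.2 = 0)
    (horthφ : ∀ γ δ : JIdx n p t, γ.1.2 = 0 → δ.1.2 = 0 →
      ∫ x, eval2 (P γ) x 0 * eval2 (P δ) x 0 ∂(μ.map Prod.fst)
        = if γ = δ then 1 else 0) :
    ∀ (x : Fin n → ℝ) (y : Fin p → ℝ),
      mon2 x y ⬝ᵥ (momMat2 n p t μ)⁻¹.mulVec (mon2 x y)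
        = mon x ⬝ᵥ (momMatX n t (μ.map Prod.fst))⁻¹.mulVec (mon x)
          + ∑ γ ∈ Finset.univ.filter
              (fun γ : JIdx n p t => 1 ≤ ∑ j, ((γ.1.2 j : ℕ))),
              (eval2 (P γ) x y) ^ 2 := by
  intro x y
  set φ := μ.map Prod.fst with hφ
  haveI : IsFiniteMeasure φ := by
    constructor
    rw [hφ, Measure.map_apply measurable_fst MeasurableSet.univ]
    exact measure_lt_top μ _
  have hφc : φ Xᶜ = 0 := by
    rw [hφ, Measure.map_apply measurable_fst hX.isClosed.measurableSet.compl]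
    refine measure_mono_null (fun z hz => ?_) hsupp
    exact fun hzm => hz hzm.1
  have hint2 : ∀ γ δ : JIdx n p t,
      Integrable (fun z : (Fin n → ℝ) × (Fin p → ℝ) => mon2 z.1 z.2 γ * mon2 z.1 z.2 δ) μ :=
    fun γ δ => integrable_of_cont μ (hX.prod hY) hsupp ((mon2_cont γ).mul (mon2_cont δ))
  have hintX : ∀ α β : MIdx n t, Integrable (fun x' => mon x' α * mon x' β) φ :=
    fun α β => integrable_of_cont φ hX hφc ((mon_cont α).mul (mon_cont β))
  set A : Matrix (JIdx n p t) (JIdx n p t) ℝ := Matrix.of fun γ δ => P γ δ with hA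
  have hAMA : A * momMat2 n p t μ * Aᵀ = 1 := by
    ext γ δ
    have h1 : (A * momMat2 n p t μ * Aᵀ) γ δ
        = ∑ i, ∑ j, P γ i * P δ j * momMat2 n p t μ i j := by
      simp only [Matrix.mul_apply, Matrix.transpose_apply, hA, Matrix.of_apply,
        Finset.sum_mul]
      rw [Finset.sum_comm]
      exact Finset.sum_congr rfl fun i _ => Finset.sum_congr rfl fun j _ => by ring
    have h3 : ∫ z, eval2 (P γ) z.1 z.2 * eval2 (P δ) z.1 z.2 ∂μ
        = ∑ i, ∑ j, P γ i * P δ j * momMat2 n p t μ i j := by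
      have h4 := expand μ (fun z (i : JIdx n p t) => mon2 z.1 z.2 i) hint2 (P γ) (P δ)
      simpa [eval2, momMat2] using h4
    rw [h1, ← h3, horth γ δ]
    simp [Matrix.one_apply]
  have hLHS : mon2 x y ⬝ᵥ (momMat2 n p t μ)⁻¹.mulVec (mon2 x y)
      = ∑ γ : JIdx n p t, (eval2 (P γ) x y)^2 := by
    rw [matrix_key _ A hAMA]
    refine Finset.sum_congr rfl fun γ _ => ?_
    have hmv : A.mulVec (mon2 x y) γ = eval2 (P γ) x y := by
      simp [Matrix.mulVec, dotProduct, eval2, hA]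
    rw [hmv]
  set B : Matrix (MIdx n t) (MIdx n t) ℝ := Matrix.of fun α β => P (emb α) (emb β) with hB
  have hrestr : ∀ (α : MIdx n t) (x' : Fin n → ℝ) (y' : Fin p → ℝ),
      eval2 (P (emb α)) x' y' = ∑ β : MIdx n t, P (emb α) (emb β) * mon x' β :=
    fun α x' y' => eval2_restrict _ (honlyx (emb α) rfl) x' y'
  have hBMB : B * momMatX n t φ * Bᵀ = 1 := by
    ext α β
    have h1 : (B * momMatX n t φ * Bᵀ) α β
        = ∑ i, ∑ j, P (emb α) (emb i) * P (emb β) (emb j) * momMatX n t φ i j := by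
      simp only [Matrix.mul_apply, Matrix.transpose_apply, hB, Matrix.of_apply,
        Finset.sum_mul]
      rw [Finset.sum_comm]
      exact Finset.sum_congr rfl fun i _ => Finset.sum_congr rfl fun j _ => by ring
    have h3 : ∫ x', eval2 (P (emb α)) x' 0 * eval2 (P (emb β)) x' 0 ∂φ
        = ∑ i, ∑ j, P (emb α) (emb i) * P (emb β) (emb j) * momMatX n t φ i j := by
      have h4 := expand φ (fun x' (i : MIdx n t) => mon x' i) hintX
        (fun i => P (emb α) (emb i)) (fun i => P (emb β) (emb i))
      have h5 : (fun x' => eval2 (P (emb α)) x' 0 * eval2 (P (emb β)) x' 0)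
          = fun x' => (∑ i : MIdx n t, P (emb α) (emb i) * mon x' i)
              * (∑ j : MIdx n t, P (emb β) (emb j) * mon x' j) := by
        funext x'; rw [hrestr, hrestr]
      calc ∫ x', eval2 (P (emb α)) x' 0 * eval2 (P (emb β)) x' 0 ∂φ
          = ∫ x', (∑ i : MIdx n t, P (emb α) (emb i) * mon x' i)
              * (∑ j : MIdx n t, P (emb β) (emb j) * mon x' j) ∂φ := by rw [h5]
        _ = _ := by simpa [momMatX] using h4
    rw [h1, ← h3, horthφ (emb α) (emb β) rfl rfl]
    simp [Matrix.one_apply, emb_inj.eq_iff]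
  have hRHS : mon x ⬝ᵥ (momMatX n t φ)⁻¹.mulVec (mon x)
      = ∑ α : MIdx n t, (eval2 (P (emb α)) x y)^2 := by
    rw [matrix_key _ B hBMB]
    refine Finset.sum_congr rfl fun α _ => ?_
    have hmv : B.mulVec (mon x) α = eval2 (P (emb α)) x y := by
      rw [hrestr α x y]
      simp [Matrix.mulVec, dotProduct, hB]
    rw [hmv]
  rw [hLHS, hRHS]
  have hfil : Finset.univ.filter (fun γ : JIdx n p t => ¬ 1 ≤ ∑ j, ((γ.1.2 j : ℕ)))
      = Finset.univ.filter (fun γ : JIdx n p t => γ.1.2 = 0) := by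
    ext γ
    simp only [Finset.mem_filter, Finset.mem_univ, true_and, not_le, Nat.lt_one_iff,
      Finset.sum_eq_zero_iff, forall_const]
    constructor
    · intro h; funext j; apply Fin.ext; simp [h j]
    · intro h i; rw [h]; simp
  rw [← Finset.sum_filter_add_sum_filter_not Finset.univ
    (fun γ : JIdx n p t => 1 ≤ ∑ j, ((γ.1.2 j : ℕ))) (fun γ => (eval2 (P γ) x y)^2),
    hfil, sum_beta_zero (fun γ => (eval2 (P γ) x y)^2)]
  ring
end
end

section
/- Let μ be a Borel measure on a compact set X×Y ⊂ ℝⁿ×ℝᵖ (p ≥ 1) with nonempty interior (so that M_t(μ) is positive definite for all t), and let φ be the marginal of μ on ℝⁿ. Then for every x ∈ ℝⁿ and every t ∈ ℕ there exists a real sequence ν_{x,t} = ((ν_{x,t})_β)_{β∈ℕᵖ_{2t}} with positive definite moment matrix M_t(ν_{x,t}) (a linear functional on ℝ[y]_{2t}, not necessarily having a representing measure) such that Λ^μ_t(x,y) = Λ^φ_t(x) · Λ^{ν_{x,t}}_t(y) for all y ∈ ℝᵖ. -/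
open MeasureTheory Matrix

noncomputable section

/-- The moment matrix `M_t(φ)` of a sequence `φ = (φ_α)`, with entries `φ_{α+β}`. -/
def momMat (n t : ℕ) (φ : (Fin n → ℕ) → ℝ) : Matrix (MIdx n t) (MIdx n t) ℝ :=
  fun α β => φ (fun i => (α.1 i : ℕ) + (β.1 i : ℕ))

/-- The Christoffel function `Λ^φ_t` of a sequence `φ`. -/
def CFseq (n t : ℕ) (φ : (Fin n → ℕ) → ℝ) (x : Fin n → ℝ) : ℝ :=
  (mon x ⬝ᵥ (momMat n t φ)⁻¹.mulVec (mon x))⁻¹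

/-- The Christoffel function `Λ^μ_t(x,y)` of a measure `μ` on `ℝⁿ × ℝᵖ`. -/
def CF2 (n p t : ℕ) (μ : Measure ((Fin n → ℝ) × (Fin p → ℝ)))
    (x : Fin n → ℝ) (y : Fin p → ℝ) : ℝ :=
  (mon2 x y ⬝ᵥ (momMat2 n p t μ)⁻¹.mulVec (mon2 x y))⁻¹

/-- The Christoffel function `Λ^φ_t(x)` of a measure `φ` on `ℝⁿ`. -/
def CFX (n t : ℕ) (φ : Measure (Fin n → ℝ)) (x : Fin n → ℝ) : ℝ :=
  (mon x ⬝ᵥ (momMatX n t φ)⁻¹.mulVec (mon x))⁻¹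

set_option linter.unusedSectionVars false
set_option linter.unusedVariables false
set_option maxHeartbeats 1000000

namespace StmtAux

variable {I : Type*} [Fintype I] [DecidableEq I]

variable {I : Type*} [Fintype I] [DecidableEq I]

lemma rstar (x : I → ℝ) : star x = x := by
  funext i; exact star_trivial _

lemma dp_self_nonneg (v : I → ℝ) : 0 ≤ v ⬝ᵥ v :=
  Finset.sum_nonneg fun i _ => mul_self_nonneg _

lemma dp_self_pos {v : I → ℝ} (hv : v ≠ 0) : 0 < v ⬝ᵥ v := by
  obtain ⟨i, hi⟩ := Function.ne_iff.mp hv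
  exact Finset.sum_pos' (fun j _ => mul_self_nonneg _)
    ⟨i, Finset.mem_univ _, mul_self_pos.mpr hi⟩

lemma cont_qform_v (A : Matrix I I ℝ) : Continuous fun v : I → ℝ => v ⬝ᵥ A *ᵥ v := by
  show Continuous fun v : I → ℝ => ∑ i, v i * ∑ j, A i j * v j
  exact continuous_finset_sum _ fun i _ => (continuous_apply i).mul <|
    continuous_finset_sum _ fun j _ => continuous_const.mul (continuous_apply j)

lemma cont_dp_self : Continuous fun v : I → ℝ => v ⬝ᵥ v := by
  show Continuous fun v : I → ℝ => ∑ i, v i * v i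
  exact continuous_finset_sum _ fun i _ => (continuous_apply i).mul (continuous_apply i)

/-- Positive definite quadratic forms have a positive lower bound on the sphere. -/
lemma exists_posdef_lower {A : Matrix I I ℝ} (hA : A.PosDef) :
    ∃ c > 0, ∀ v : I → ℝ, c * (v ⬝ᵥ v) ≤ v ⬝ᵥ A *ᵥ v := by
  rcases isEmpty_or_nonempty I with h | h
  · exact ⟨1, one_pos, fun v => by simp [dotProduct]⟩
  · set q : (I → ℝ) → ℝ := fun v => v ⬝ᵥ A *ᵥ v with hqdef
    have hqc : Continuous q := cont_qform_v A
    set Sph : Set (I → ℝ) := {v | v ⬝ᵥ v = 1} with hSph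
    have hclosed : IsClosed Sph := isClosed_eq cont_dp_self continuous_const
    have hsub : Sph ⊆ Set.pi Set.univ fun _ : I => Set.Icc (-1:ℝ) 1 := by
      intro v hv i _
      have hv' : v ⬝ᵥ v = 1 := hv
      have h1 : v i * v i ≤ 1 := by
        have h2 := Finset.single_le_sum (f := fun j => v j * v j)
          (fun j _ => mul_self_nonneg _) (Finset.mem_univ i)
        rw [show ∑ j, v j * v j = v ⬝ᵥ v from rfl, hv'] at h2
        exact h2
      constructor <;> nlinarith
    have hcomp : IsCompact Sph :=
      (isCompact_univ_pi fun _ : I => isCompact_Icc).of_isClosed_subset hclosed hsub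
    have hne : Sph.Nonempty := by
      refine ⟨Pi.single (Classical.arbitrary I) 1, ?_⟩
      show Pi.single (Classical.arbitrary I) 1 ⬝ᵥ Pi.single (Classical.arbitrary I) 1 = 1
      rw [dotProduct_single]
      simp
    obtain ⟨v₁, hv₁, hmin⟩ := hcomp.exists_isMinOn hne hqc.continuousOn
    have hv₁' : v₁ ⬝ᵥ v₁ = 1 := hv₁
    have hv₁0 : v₁ ≠ 0 := by
      intro h0
      rw [h0] at hv₁'
      simp [dotProduct] at hv₁'
    have hc : 0 < q v₁ := by
      have := hA.dotProduct_mulVec_pos hv₁0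
      rwa [rstar] at this
    refine ⟨q v₁, hc, fun v => ?_⟩
    rcases eq_or_ne v 0 with rfl | hv
    · simp [q]
    · have hs : 0 < v ⬝ᵥ v := dp_self_pos hv
      have hsq : Real.sqrt (v ⬝ᵥ v) * Real.sqrt (v ⬝ᵥ v) = v ⬝ᵥ v :=
        Real.mul_self_sqrt hs.le
      have hsqpos : 0 < Real.sqrt (v ⬝ᵥ v) := Real.sqrt_pos.mpr hs
      set u := (Real.sqrt (v ⬝ᵥ v))⁻¹ • v with hu
      have huS : u ∈ Sph := by
        show u ⬝ᵥ u = 1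
        rw [hu, smul_dotProduct, dotProduct_smul, smul_eq_mul, smul_eq_mul]
        field_simp
        exact (Real.sq_sqrt hs.le).symm
      have hle : q v₁ ≤ q u := hmin huS
      have hqu : q u * (v ⬝ᵥ v) = q v := by
        show ((Real.sqrt (v ⬝ᵥ v))⁻¹ • v ⬝ᵥ A *ᵥ ((Real.sqrt (v ⬝ᵥ v))⁻¹ • v)) * _ = _
        rw [mulVec_smul, smul_dotProduct, dotProduct_smul, smul_eq_mul, smul_eq_mul]
        field_simp
        rw [Real.sq_sqrt hs.le]
        show _ = _ * (v ⬝ᵥ A *ᵥ v)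
        ring
      nlinarith [hle, hs, hqu, hc]


variable {I : Type*} [Fintype I] [DecidableEq I]

lemma posDef_conj {P : Matrix I I ℝ} (hP : P.PosDef) {J : Type*} [Fintype J] [DecidableEq J]
    (E : Matrix I J ℝ) (hE : ∀ x : J → ℝ, x ≠ 0 → E *ᵥ x ≠ 0) : (Eᴴ * P * E).PosDef := by
  refine PosDef.of_dotProduct_mulVec_pos (isHermitian_conjTranspose_mul_mul E hP.1) fun x hx => ?_
  have h := hP.dotProduct_mulVec_pos (hE x hx)
  simpa only [star_mulVec, dotProduct_mulVec, vecMul_vecMul] using h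

lemma submatrix_one_mulVec_ne {J : Type*} [Fintype J] [DecidableEq J]
    {e : I → J} (he : Function.Injective e) {x : I → ℝ} (hx : x ≠ 0) :
    ((1 : Matrix J J ℝ).submatrix id e) *ᵥ x ≠ 0 := by
  obtain ⟨i₀, hi₀⟩ := Function.ne_iff.mp hx
  have hval : (((1 : Matrix J J ℝ).submatrix id e) *ᵥ x) (e i₀) = x i₀ := by
    show ∑ i, (1 : Matrix J J ℝ) (e i₀) (e i) * x i = x i₀
    rw [Finset.sum_eq_single i₀]
    · simp [one_apply]
    · intro b _ hb
      rw [one_apply, if_neg (fun h => hb (he h).symm), zero_mul]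
    · intro h; exact absurd (Finset.mem_univ i₀) h
  intro h0
  rw [h0] at hval
  exact hi₀ hval.symm

lemma posDef_submatrix' {J : Type*} [Fintype J] [DecidableEq J] {M : Matrix J J ℝ}
    (hM : M.PosDef) {e : I → J} (he : Function.Injective e) : (M.submatrix e e).PosDef := by
  rw [(by simp : M = 1 * M * 1), Matrix.submatrix_mul (he₂ := Function.bijective_id),
    Matrix.submatrix_mul (he₂ := Function.bijective_id), Matrix.submatrix_id_id]
  have h := posDef_conj hM ((1 : Matrix J J ℝ).submatrix id e)
    (fun x hx => submatrix_one_mulVec_ne he hx)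
  simpa only [conjTranspose_submatrix, conjTranspose_one] using h

lemma posDef_smul {A : Matrix I I ℝ} (hA : A.PosDef) {c : ℝ} (hc : 0 < c) : (c • A).PosDef := by
  refine PosDef.of_dotProduct_mulVec_pos ?_ fun x hx => ?_
  · show (c • A)ᴴ = c • A
    rw [conjTranspose_smul, star_trivial, hA.1.eq]
  · rw [smul_mulVec, dotProduct_smul, smul_eq_mul]
    exact mul_pos hc (hA.dotProduct_mulVec_pos hx)

lemma psd_diag_nonneg {N : Matrix I I ℝ} (hN : N.PosSemidef) (i : I) : 0 ≤ N i i := by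
  have h := hN.dotProduct_mulVec_nonneg (Pi.single i 1)
  rw [rstar] at h
  simpa [single_dotProduct, mulVec_single] using h

lemma trace_nonneg_psd {N : Matrix I I ℝ} (hN : N.PosSemidef) : 0 ≤ N.trace :=
  Finset.sum_nonneg fun i _ => psd_diag_nonneg hN i

open scoped MatrixOrder in
lemma trace_mul_psd_nonneg {B N : Matrix I I ℝ} (hB : B.PosSemidef) (hN : N.PosSemidef) :
    0 ≤ (B * N).trace := by
  obtain ⟨C, rfl⟩ := CStarAlgebra.nonneg_iff_eq_star_mul_self.mp hN.nonneg
  rw [trace_mul_comm, Matrix.mul_assoc, trace_mul_comm]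
  exact trace_nonneg_psd (hB.mul_mul_conjTranspose_same C)


variable {I : Type*} [Fintype I] [DecidableEq I]

-- placeholders from previous chunks
lemma psd_entry_le_trace {N : Matrix I I ℝ} (hN : N.PosSemidef) (i j : I) :
    |N i j| ≤ N.trace := by
  have hdiag : ∀ k, 0 ≤ N k k := fun k => by
    have h := hN.dotProduct_mulVec_nonneg (Pi.single k 1)
    rw [rstar] at h
    simpa [single_dotProduct, mulVec_single] using h
  have htr : ∀ k, N k k ≤ N.trace := fun k =>
    Finset.single_le_sum (f := fun k => N k k) (fun k _ => hdiag k) (Finset.mem_univ k)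
  rcases eq_or_ne i j with rfl | hij
  · rw [abs_of_nonneg (hdiag i)]; exact htr i
  · have hsym : N j i = N i j := by
      have h := congrFun (congrFun hN.1.eq i) j
      simpa [conjTranspose_apply] using h
    have key : ∀ s : ℝ, 0 ≤ N i i + s * N i j + s * N j i + s * s * N j j := by
      intro s
      have h := hN.dotProduct_mulVec_nonneg (Pi.single i 1 + Pi.single j s)
      rw [rstar] at h
      simp only [mulVec_add, dotProduct_add, add_dotProduct, single_dotProduct,
        mulVec_single, Pi.add_apply, Pi.single_eq_same, one_mul, mul_one,
        Pi.single_eq_of_ne hij, Pi.single_eq_of_ne (Ne.symm hij), add_zero, zero_add] at h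
      simp only [Pi.smul_apply, op_smul_eq_mul, col_apply, mul_one] at h
      nlinarith [h]
    have h1 := key 1
    have h2 := key (-1)
    have hij2 : N i i + N j j ≤ N.trace := by
      have hsub : ({i, j} : Finset I) ⊆ Finset.univ := Finset.subset_univ _
      have := Finset.sum_le_sum_of_subset_of_nonneg hsub
        (fun k _ _ => hdiag k)
      rwa [Finset.sum_pair hij] at this
    rw [abs_le]
    constructor <;> nlinarith [hsym, h1, h2, hij2]

lemma trace_eq_sum_eig {A : Matrix I I ℝ} (hA : A.IsHermitian) :
    A.trace = ∑ i, hA.eigenvalues i := by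
  nth_rewrite 1 [hA.spectral_theorem]
  rw [Unitary.conjStarAlgAut_apply, Matrix.trace_mul_cycle]
  rw [show (star (Matrix.IsHermitian.eigenvectorUnitary hA : Matrix I I ℝ)) *
      (Matrix.IsHermitian.eigenvectorUnitary hA : Matrix I I ℝ) = 1 from
      Matrix.mem_unitaryGroup_iff'.mp (Matrix.IsHermitian.eigenvectorUnitary hA).2]
  rw [Matrix.one_mul, Matrix.trace_diagonal]
  simp

lemma psd_det_le {N : Matrix I I ℝ} (hN : N.PosSemidef) :
    N.det ≤ N.trace ^ (Fintype.card I) := by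
  have h1 : N.det = ∏ i, hN.1.eigenvalues i := by
    have h := hN.1.det_eq_prod_eigenvalues
    simpa using h
  have h2 : N.trace = ∑ i, hN.1.eigenvalues i := trace_eq_sum_eig hN.1
  rw [h1, h2]
  have hnn : ∀ i, 0 ≤ hN.1.eigenvalues i := fun i => hN.eigenvalues_nonneg i
  calc ∏ i, hN.1.eigenvalues i
      ≤ ∏ _i : I, ∑ j, hN.1.eigenvalues j := by
        refine Finset.prod_le_prod (fun i _ => hnn i) (fun i _ => ?_)
        exact Finset.single_le_sum (fun j _ => hnn j) (Finset.mem_univ i)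
    _ = (∑ j, hN.1.eigenvalues j) ^ (Fintype.card I) := by
        rw [Finset.prod_const, Finset.card_univ]

lemma psd_posdef_of_det {N : Matrix I I ℝ} (hN : N.PosSemidef) (hdet : N.det ≠ 0) :
    N.PosDef := by
  refine PosDef.of_dotProduct_mulVec_pos hN.1 fun x hx => ?_
  rcases (hN.dotProduct_mulVec_nonneg x).lt_or_eq with h | h
  · exact h
  · exfalso
    have hNx : N *ᵥ x = 0 := (hN.dotProduct_mulVec_zero_iff x).mp h.symm
    have hinv : N⁻¹ * N = 1 := Matrix.nonsing_inv_mul N (Ne.isUnit hdet)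
    have : x = 0 := by
      have h2 := congrArg (fun v => N⁻¹ *ᵥ v) hNx
      simpa [Matrix.mulVec_mulVec, hinv] using h2
    exact hx this

lemma hasDerivAt_log_det {N : Matrix I I ℝ} (hN : N.PosDef) (H : Matrix I I ℝ) :
    HasDerivAt (fun s : ℝ => Real.log (N + s • H).det) ((N⁻¹ * H).trace) 0 := by
  have hdN : N.det ≠ 0 := hN.det_pos.ne'
  set M := N⁻¹ * H with hM
  set Q := (Matrix.det (1 + (Polynomial.X : Polynomial ℝ) • M.map Polynomial.C)).divX.divX
    with hQ
  have hfac : ∀ s : ℝ, (N + s • H).det = N.det * (1 + M.trace * s + Q.eval s * s ^ 2) := by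
    intro s
    have hNH : N * (N⁻¹ * H) = H := by
      rw [← Matrix.mul_assoc, Matrix.mul_nonsing_inv N (Ne.isUnit hdN), Matrix.one_mul]
    have h1 : N + s • H = N * (1 + s • M) := by
      rw [Matrix.mul_add, Matrix.mul_one, mul_smul_comm, hM, hNH]
    rw [h1, Matrix.det_mul, Matrix.det_one_add_smul s M]
  have hψ : HasDerivAt (fun s : ℝ => 1 + M.trace * s + Q.eval s * s ^ 2) M.trace 0 := by
    have h1 : HasDerivAt (fun s : ℝ => M.trace * s) M.trace 0 := by
      simpa using (hasDerivAt_id (0 : ℝ)).const_mul M.trace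
    have h2 : HasDerivAt (fun s : ℝ => Q.eval s * s ^ 2) 0 0 := by
      have h := (Q.hasDerivAt (0 : ℝ)).fun_mul (hasDerivAt_pow 2 (0 : ℝ))
      simpa using h
    simpa using ((hasDerivAt_const (0 : ℝ) (1 : ℝ)).fun_add h1).fun_add h2
  have hd : HasDerivAt (fun s : ℝ => N.det * (1 + M.trace * s + Q.eval s * s ^ 2))
      (N.det * M.trace) 0 := hψ.const_mul N.det
  have hne : N.det * (1 + M.trace * 0 + Q.eval 0 * 0 ^ 2) ≠ 0 := by
    simpa using hdN
  have hlog := hd.log hne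
  have heq : (fun s : ℝ => Real.log (N.det * (1 + M.trace * s + Q.eval s * s ^ 2)))
      = fun s : ℝ => Real.log (N + s • H).det := by
    funext s; rw [hfac]
  rw [heq] at hlog
  convert hlog using 1
  field_simp
  simp


variable {I : Type*} [Fintype I] [DecidableEq I]


lemma abs_qform_le (H : Matrix I I ℝ) (v : I → ℝ) :
    |v ⬝ᵥ H *ᵥ v| ≤ (∑ i, ∑ j, |H i j|) * (v ⬝ᵥ v) := by
  have hvv : ∀ i j : I, |v i| * |v j| ≤ v ⬝ᵥ v := by
    intro i j
    have h1 : v i * v i ≤ v ⬝ᵥ v :=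
      Finset.single_le_sum (f := fun k => v k * v k) (fun k _ => mul_self_nonneg _)
        (Finset.mem_univ i)
    have h2 : v j * v j ≤ v ⬝ᵥ v :=
      Finset.single_le_sum (f := fun k => v k * v k) (fun k _ => mul_self_nonneg _)
        (Finset.mem_univ j)
    nlinarith [abs_nonneg (v i), abs_nonneg (v j), sq_abs (v i), sq_abs (v j),
      sq_nonneg (|v i| - |v j|)]
  have hexp : v ⬝ᵥ H *ᵥ v = ∑ i, ∑ j, v i * (H i j * v j) := by
    simp [dotProduct, mulVec, Finset.mul_sum]
  rw [hexp, Finset.sum_mul]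
  refine (Finset.abs_sum_le_sum_abs _ _).trans (Finset.sum_le_sum fun i _ => ?_)
  rw [Finset.sum_mul]
  refine (Finset.abs_sum_le_sum_abs _ _).trans (Finset.sum_le_sum fun j _ => ?_)
  have h := hvv i j
  calc |v i * (H i j * v j)| = |H i j| * (|v i| * |v j|) := by
        rw [abs_mul, abs_mul]; ring
    _ ≤ |H i j| * (v ⬝ᵥ v) := by
        exact mul_le_mul_of_nonneg_left h (abs_nonneg _)

lemma posdef_line {N H : Matrix I I ℝ} (hN : N.PosDef) (hH : H.IsHermitian) :
    ∃ ε > 0, ∀ s : ℝ, |s| < ε → (N + s • H).PosDef := by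
  obtain ⟨c, hc, hlow⟩ := exists_posdef_lower hN
  set CH := (∑ i, ∑ j, |H i j|) + 1 with hCH
  have hCH0 : 0 < CH := by
    have : 0 ≤ ∑ i, ∑ j, |H i j| :=
      Finset.sum_nonneg fun i _ => Finset.sum_nonneg fun j _ => abs_nonneg _
    linarith
  refine ⟨c / CH, div_pos hc hCH0, fun s hs => ?_⟩
  refine PosDef.of_dotProduct_mulVec_pos ?_ ?_
  · show (N + s • H)ᴴ = N + s • H
    rw [conjTranspose_add, conjTranspose_smul, star_trivial, hN.1.eq, hH.eq]
  · intro v hv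
    rw [rstar, add_mulVec, dotProduct_add, smul_mulVec, dotProduct_smul, smul_eq_mul]
    have h1 : c * (v ⬝ᵥ v) ≤ v ⬝ᵥ N *ᵥ v := hlow v
    have hvv : 0 < v ⬝ᵥ v := dp_self_pos hv
    have h2 : |v ⬝ᵥ H *ᵥ v| ≤ (CH - 1) * (v ⬝ᵥ v) := by
      rw [hCH]; simpa using abs_qform_le H v
    have h3 : |s * (v ⬝ᵥ H *ᵥ v)| ≤ |s| * ((CH - 1) * (v ⬝ᵥ v)) := by
      rw [abs_mul]
      exact mul_le_mul_of_nonneg_left h2 (abs_nonneg s)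
    have h4 : |s| * ((CH - 1) * (v ⬝ᵥ v)) ≤ (c / CH) * ((CH - 1) * (v ⬝ᵥ v)) := by
      refine mul_le_mul_of_nonneg_right hs.le ?_
      have : (0:ℝ) ≤ CH - 1 := by
        rw [hCH]; simp
        exact Finset.sum_nonneg fun i _ => Finset.sum_nonneg fun j _ => abs_nonneg _
      positivity
    have h5 : (c / CH) * ((CH - 1) * (v ⬝ᵥ v)) < c * (v ⬝ᵥ v) := by
      have hlt : (c / CH) * (CH - 1) < c := by
        rw [div_mul_eq_mul_div, mul_sub, mul_one, sub_div, mul_div_assoc,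
          div_self hCH0.ne', mul_one]
        have : 0 < c / CH := div_pos hc hCH0
        linarith
      have h6 : (c / CH) * ((CH - 1) * (v ⬝ᵥ v)) = ((c / CH) * (CH - 1)) * (v ⬝ᵥ v) := by ring
      rw [h6]
      exact mul_lt_mul_of_pos_right hlt hvv
    have h7 : -(s * (v ⬝ᵥ H *ᵥ v)) ≤ |s * (v ⬝ᵥ H *ᵥ v)| := neg_le_abs _
    have h8 : -(s * (v ⬝ᵥ H *ᵥ v)) < c * (v ⬝ᵥ v) :=
      h7.trans_lt ((h3.trans h4).trans_lt h5)
    linarith [h1, h8]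

lemma trace_mul_vecMulVec (A : Matrix I I ℝ) (w : I → ℝ) :
    (A * vecMulVec w w).trace = w ⬝ᵥ A *ᵥ w := by
  simp only [Matrix.trace, Matrix.diag_apply, Matrix.mul_apply, vecMulVec_apply,
    dotProduct, mulVec, Finset.mul_sum]
  exact Finset.sum_congr rfl fun i _ => Finset.sum_congr rfl fun j _ => by ring


lemma trace_mul_lower {B : Matrix I I ℝ} (hB : B.PosDef) :
    ∃ c > 0, ∀ N : Matrix I I ℝ, N.PosSemidef → c * N.trace ≤ (B * N).trace := by
  obtain ⟨c, hc, hlow⟩ := exists_posdef_lower hB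
  refine ⟨c, hc, fun N hN => ?_⟩
  have hBc : (B - c • (1 : Matrix I I ℝ)).PosSemidef := by
    refine PosSemidef.of_dotProduct_mulVec_nonneg ?_ ?_
    · show _ᴴ = _
      rw [conjTranspose_sub, conjTranspose_smul, star_trivial, conjTranspose_one, hB.1.eq]
    · intro v
      rw [rstar, Matrix.sub_mulVec, dotProduct_sub, smul_mulVec, one_mulVec,
        dotProduct_smul, smul_eq_mul]
      linarith [hlow v]
  have h0 := trace_mul_psd_nonneg hBc hN
  rw [Matrix.sub_mul, trace_sub, Matrix.smul_mul, Matrix.one_mul, trace_smul, smul_eq_mul] at h0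
  linarith


variable {I : Type*} [Fintype I] [DecidableEq I]

lemma psd_det_nonneg {N : Matrix I I ℝ} (hN : N.PosSemidef) : 0 ≤ N.det := by
  have h : N.det = ∏ i, hN.1.eigenvalues i := by simpa using hN.1.det_eq_prod_eigenvalues
  rw [h]
  exact Finset.prod_nonneg fun i _ => hN.eigenvalues_nonneg i
lemma cont_qform_N (v : I → ℝ) : Continuous fun N : Matrix I I ℝ => v ⬝ᵥ N *ᵥ v := by
  show Continuous fun N : Matrix I I ℝ => ∑ i, v i * ∑ j, N i j * v j
  exact continuous_finset_sum _ fun i _ => continuous_const.mul <|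
    continuous_finset_sum _ fun j _ =>
      (continuous_id.matrix_elem i j).mul continuous_const

lemma isClosed_psd : IsClosed {N : Matrix I I ℝ | N.PosSemidef} := by
  have heq : {N : Matrix I I ℝ | N.PosSemidef}
      = (⋂ i : I, ⋂ j : I, {N : Matrix I I ℝ | N j i = N i j})
        ∩ ⋂ v : I → ℝ, {N : Matrix I I ℝ | 0 ≤ v ⬝ᵥ N *ᵥ v} := by
    ext N
    simp only [Set.mem_setOf_eq, Set.mem_inter_iff, Set.mem_iInter]
    constructor
    · intro hN
      refine ⟨fun i j => ?_, fun v => ?_⟩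
      · have h := congrFun (congrFun hN.1.eq i) j
        simpa [conjTranspose_apply] using h
      · have h := hN.dotProduct_mulVec_nonneg v
        rwa [rstar] at h
    · intro ⟨hsym, hpos⟩
      refine PosSemidef.of_dotProduct_mulVec_nonneg ?_ fun v => ?_
      · ext i j
        simp only [conjTranspose_apply, star_trivial]
        exact hsym i j
      · rw [rstar]
        exact hpos v
  rw [heq]
  refine IsClosed.inter ?_ (isClosed_iInter fun v =>
    isClosed_le continuous_const (cont_qform_N v))
  refine isClosed_iInter fun i => isClosed_iInter fun j =>
    isClosed_eq (continuous_id.matrix_elem j i) (continuous_id.matrix_elem i j)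

/-- The key existence result: minimize `⟨B,N⟩ - log det N` over the PD elements of a
linear family `W`.  At the minimum the gradient condition holds. -/
theorem exists_grad_zero [Nonempty I] {B N₀ : Matrix I I ℝ} (hB : B.PosDef)
    (W : Matrix I I ℝ → Prop) (hWc : IsClosed {N | W N})
    (hWadd : ∀ {N H : Matrix I I ℝ} {s : ℝ}, W N → W H → W (N + s • H))
    (hWherm : ∀ {H : Matrix I I ℝ}, W H → H.IsHermitian)
    (hN₀ : N₀.PosDef) (hWN₀ : W N₀) :
    ∃ N : Matrix I I ℝ, W N ∧ N.PosDef ∧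
      ∀ H : Matrix I I ℝ, W H → (B * H).trace = (N⁻¹ * H).trace := by
  classical
  obtain ⟨c, hc, hlow⟩ := trace_mul_lower hB
  set k : ℕ := Fintype.card I with hk
  have hk1 : 1 ≤ k := Fintype.card_pos
  set f : Matrix I I ℝ → ℝ := fun N => (B * N).trace - Real.log N.det with hf
  set C0 : ℝ := f N₀ with hC0
  set a : ℝ := 2 * k / Real.sqrt c with ha
  have ha0 : 0 ≤ a := by positivity
  set R : ℝ := (a + 1 + max C0 0) ^ 2 with hR
  have hC0R : C0 ≤ R := by
    have h1 : C0 ≤ max C0 0 := le_max_left _ _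
    have h2 : (0:ℝ) ≤ max C0 0 := le_max_right _ _
    nlinarith [h1, h2, ha0]
  -- sublevel bound
  have hsub : ∀ N : Matrix I I ℝ, N.PosSemidef → f N ≤ C0 → (B * N).trace ≤ R := by
    intro N hpsd hfN
    set u : ℝ := (B * N).trace with hu
    have hu0 : 0 ≤ u := trace_mul_psd_nonneg hB.posSemidef hpsd
    have hdet0 : 0 ≤ N.det := psd_det_nonneg hpsd
    rcases eq_or_lt_of_le hdet0 with hdet | hdet
    · -- det = 0, so log det = 0 and u ≤ C0 ≤ R
      have : Real.log N.det = 0 := by rw [← hdet, Real.log_zero]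
      have hfN' : u - Real.log N.det ≤ C0 := hfN
      rw [this] at hfN'
      linarith [hC0R]
    · have htr0 : 0 < N.trace := by
        by_contra htr
        push_neg at htr
        have htr' : N.trace = 0 := le_antisymm htr (trace_nonneg_psd hpsd)
        have := psd_det_le hpsd
        rw [htr', ← hk, zero_pow (by omega : k ≠ 0)] at this
        linarith
      have hupos : 0 < u := lt_of_lt_of_le (mul_pos hc htr0) (hlow N hpsd)
      have h1 : u - C0 ≤ Real.log N.det := by
        have hfN' : u - Real.log N.det ≤ C0 := hfN
        linarith [hfN']
      have h2 : Real.log N.det ≤ (k : ℝ) * Real.log N.trace := by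
        rw [← Real.log_pow]
        exact Real.log_le_log hdet (by rw [hk]; exact psd_det_le hpsd)
      have htru : N.trace ≤ u / c := by
        rw [le_div_iff₀ hc]
        calc N.trace * c = c * N.trace := by ring
          _ ≤ u := hlow N hpsd
      have h3 : Real.log N.trace ≤ Real.log (u / c) := Real.log_le_log htr0 htru
      have huc : 0 < u / c := div_pos hupos hc
      have h4 : Real.log (u / c) ≤ 2 * Real.sqrt (u / c) := by
        have h5 : Real.log (Real.sqrt (u / c)) ≤ Real.sqrt (u / c) - 1 :=
          Real.log_le_sub_one_of_pos (Real.sqrt_pos.mpr huc)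
        have h6 : Real.log (Real.sqrt (u / c)) = Real.log (u / c) / 2 :=
          Real.log_sqrt huc.le
        linarith [h5, h6]
      have h7 : Real.sqrt (u / c) = Real.sqrt u / Real.sqrt c :=
        Real.sqrt_div hu0 c
      set s : ℝ := Real.sqrt u with hs
      have hs0 : 0 ≤ s := Real.sqrt_nonneg u
      have hs2 : s ^ 2 = u := Real.sq_sqrt hu0
      have hkey : u ≤ C0 + a * s := by
        calc u ≤ C0 + Real.log N.det := by linarith [h1]
            _ ≤ C0 + (k : ℝ) * Real.log N.trace := by linarith [h2]
            _ ≤ C0 + (k : ℝ) * Real.log (u / c) := by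
                have hkpos : (0:ℝ) ≤ (k:ℝ) := Nat.cast_nonneg k
                nlinarith [h3, hkpos]
            _ ≤ C0 + (k : ℝ) * (2 * Real.sqrt (u / c)) := by
                have hkpos : (0:ℝ) ≤ (k:ℝ) := Nat.cast_nonneg k
                nlinarith [h4, hkpos]
            _ = C0 + (k : ℝ) * (2 * (s / Real.sqrt c)) := by rw [h7]
            _ = C0 + a * s := by
                have hsc : 0 < Real.sqrt c := Real.sqrt_pos.mpr hc
                have heq2 : (k : ℝ) * (2 * (s / Real.sqrt c)) = a * s := by
                  rw [ha]; field_simp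
                rw [heq2]
      -- now s^2 ≤ C0 + a s implies u ≤ R
      have hkey2 : s ^ 2 ≤ max C0 0 + a * s := by
        have := le_max_left C0 0
        nlinarith [hkey, hs2]
      have hm1 : (1:ℝ) ≤ a + 1 + max C0 0 := by
        have := le_max_right C0 0
        linarith [ha0]
      have hsm : s ≤ a + 1 + max C0 0 := by
        by_contra hsm
        push_neg at hsm
        have h8 : max C0 0 ≤ max C0 0 * s := by
          nlinarith [le_max_right C0 0, hm1, hsm]
        nlinarith [hkey2, hsm, ha0, le_max_right C0 0, hs0]
      calc u = s ^ 2 := hs2.symm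
        _ ≤ (a + 1 + max C0 0) ^ 2 := by nlinarith [hsm, hs0]
        _ = R := hR.symm
  -- the compact feasible set
  set r : ℝ := R / c with hr
  set S : Set (Matrix I I ℝ) :=
    {N | W N ∧ N.PosSemidef ∧ Real.exp (-C0) ≤ N.det ∧ (B * N).trace ≤ R} with hS
  have hKS : ∀ N : Matrix I I ℝ, W N → N.PosDef → f N ≤ C0 → N ∈ S := by
    intro N hWN hPD hfN
    refine ⟨hWN, hPD.posSemidef, ?_, hsub N hPD.posSemidef hfN⟩
    have hdet : 0 < N.det := hPD.det_pos
    have h1 : -C0 ≤ Real.log N.det := by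
      have hu0 : 0 ≤ (B * N).trace := trace_mul_psd_nonneg hB.posSemidef hPD.posSemidef
      have hfN' : (B * N).trace - Real.log N.det ≤ C0 := hfN
      linarith [hfN']
    calc Real.exp (-C0) ≤ Real.exp (Real.log N.det) := Real.exp_le_exp.mpr h1
      _ = N.det := Real.exp_log hdet
  have hN₀S : N₀ ∈ S := hKS N₀ hWN₀ hN₀ le_rfl
  -- compactness
  have hSBox : S ⊆ Set.univ.pi fun _ : I => Set.univ.pi fun _ : I => Set.Icc (-r) r := by
    intro N hN
    have htr : N.trace ≤ r := by
      rw [hr, le_div_iff₀ hc]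
      calc N.trace * c = c * N.trace := by ring
        _ ≤ (B * N).trace := hlow N hN.2.1
        _ ≤ R := hN.2.2.2
    intro i _
    intro j _
    have := psd_entry_le_trace hN.2.1 i j
    have habs : |N i j| ≤ r := le_trans this htr
    exact ⟨neg_le_of_abs_le habs, le_of_abs_le habs⟩
  have hBoxCompact : IsCompact (Set.univ.pi fun _ : I => Set.univ.pi
      fun _ : I => Set.Icc (-r : ℝ) r) :=
    isCompact_univ_pi fun _ => isCompact_univ_pi fun _ => isCompact_Icc
  have hSclosed : IsClosed S := by
    have h1 : S = {N | W N} ∩ ({N | N.PosSemidef}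
        ∩ ({N | Real.exp (-C0) ≤ N.det} ∩ {N | (B * N).trace ≤ R})) := by
      ext N; simp [hS, Set.mem_setOf_eq, and_assoc]
    rw [h1]
    refine hWc.inter (isClosed_psd.inter (IsClosed.inter ?_ ?_))
    · exact isClosed_le continuous_const continuous_id.matrix_det
    · exact isClosed_le (continuous_const.matrix_mul continuous_id).matrix_trace
        continuous_const
  have hScomp : IsCompact S := hBoxCompact.of_isClosed_subset hSclosed hSBox
  have hfcont : ContinuousOn f S := by
    refine ContinuousOn.sub
      ((continuous_const.matrix_mul continuous_id).matrix_trace).continuousOn ?_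
    refine ContinuousOn.log continuous_id.matrix_det.continuousOn ?_
    intro N hN
    exact ne_of_gt (lt_of_lt_of_le (Real.exp_pos _) hN.2.2.1)
  obtain ⟨N, hNS, hmin⟩ := hScomp.exists_isMinOn ⟨N₀, hN₀S⟩ hfcont
  have hNPD : N.PosDef := psd_posdef_of_det hNS.2.1
    (ne_of_gt (lt_of_lt_of_le (Real.exp_pos _) hNS.2.2.1))
  have hfNC0 : f N ≤ C0 := hmin hN₀S
  refine ⟨N, hNS.1, hNPD, fun H hWH => ?_⟩
  have hHherm : H.IsHermitian := hWherm hWH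
  obtain ⟨ε, hε, hline⟩ := posdef_line hNPD hHherm
  set φ : ℝ → ℝ := fun s => ((B * N).trace + s * (B * H).trace)
    - Real.log (N + s • H).det with hφ
  have hφeq : ∀ s : ℝ, f (N + s • H) = φ s := by
    intro s
    rw [hf, hφ]
    simp only
    rw [Matrix.mul_add, trace_add, mul_smul_comm, trace_smul, smul_eq_mul]
  have hφ0 : φ 0 = f N := by
    rw [← hφeq 0]
    simp
  have hloc : IsLocalMin φ 0 := by
    have hmem : Metric.ball (0 : ℝ) ε ∈ nhds (0 : ℝ) := Metric.ball_mem_nhds _ hε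
    refine Filter.eventually_of_mem hmem fun s hs => ?_
    have habs : |s| < ε := by
      simpa [Real.dist_eq] using hs
    have hPD' : (N + s • H).PosDef := hline s habs
    rw [hφ0, ← hφeq s]
    rcases le_or_gt (f N) (f (N + s • H)) with h | h
    · exact h
    · exfalso
      have hmem2 : (N + s • H) ∈ S :=
        hKS _ (hWadd hNS.1 hWH) hPD' (le_trans h.le hfNC0)
      exact absurd (hmin hmem2) (not_le.mpr h)
  have hder : HasDerivAt φ ((B * H).trace - (N⁻¹ * H).trace) 0 := by
    refine HasDerivAt.sub ?_ (hasDerivAt_log_det hNPD H)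
    have h1 : HasDerivAt (fun s : ℝ => s * (B * H).trace) ((B * H).trace) 0 := by
      simpa using (hasDerivAt_id (0 : ℝ)).mul_const ((B * H).trace)
    simpa using (hasDerivAt_const (0 : ℝ) ((B * N).trace)).fun_add h1
  have hzero := hloc.hasDerivAt_eq_zero hder
  linarith [sub_eq_zero.mp hzero]


end StmtAux

namespace StmtAux

variable {p t n : ℕ}

variable {p t n : ℕ}

/-- The sum of two multi-indices. -/
def sIdx (a b : MIdx p t) : Fin p → ℕ := fun j => (a.1 j : ℕ) + (b.1 j : ℕ)

/-- Hankel matrices: the entry depends only on the sum of the indices. -/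
def Hk (N : Matrix (MIdx p t) (MIdx p t) ℝ) : Prop :=
  ∀ a b c d : MIdx p t, sIdx a b = sIdx c d → N a b = N c d

lemma momMat_apply (ν : (Fin p → ℕ) → ℝ) (a b : MIdx p t) :
    momMat p t ν a b = ν (sIdx a b) := rfl

lemma hk_exists_nu {N : Matrix (MIdx p t) (MIdx p t) ℝ} (hN : Hk N) :
    ∃ ν : (Fin p → ℕ) → ℝ, momMat p t ν = N := by
  classical
  refine ⟨fun γ => if h : ∃ ab : MIdx p t × MIdx p t, sIdx ab.1 ab.2 = γ
    then N h.choose.1 h.choose.2 else 0, ?_⟩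
  funext a b
  rw [momMat_apply]
  have hex : ∃ ab : MIdx p t × MIdx p t, sIdx ab.1 ab.2 = sIdx a b := ⟨(a, b), rfl⟩
  rw [dif_pos hex]
  exact hN _ _ _ _ hex.choose_spec

lemma hk_herm {N : Matrix (MIdx p t) (MIdx p t) ℝ} (hN : Hk N) : N.IsHermitian := by
  ext i j
  rw [conjTranspose_apply, star_trivial]
  exact hN j i i j (funext fun k => Nat.add_comm _ _)

lemma hk_add_smul {N H : Matrix (MIdx p t) (MIdx p t) ℝ} {s : ℝ} (hN : Hk N) (hH : Hk H) :
    Hk (N + s • H) := by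
  intro a b c d h
  have h1 := hN a b c d h
  have h2 := hH a b c d h
  simp only [Matrix.add_apply, Matrix.smul_apply, h1, h2, smul_eq_mul]

lemma hk_closed : IsClosed {N : Matrix (MIdx p t) (MIdx p t) ℝ | Hk N} := by
  have heq : {N : Matrix (MIdx p t) (MIdx p t) ℝ | Hk N} =
      ⋂ (a : MIdx p t) (b : MIdx p t) (c : MIdx p t) (d : MIdx p t)
        (_ : sIdx a b = sIdx c d), {N : Matrix (MIdx p t) (MIdx p t) ℝ | N a b = N c d} := by
    ext N
    simp only [Set.mem_setOf_eq, Set.mem_iInter]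
    exact Iff.rfl
  rw [heq]
  exact isClosed_iInter fun a => isClosed_iInter fun b => isClosed_iInter fun c =>
    isClosed_iInter fun d => isClosed_iInter fun _ =>
      isClosed_eq (continuous_id.matrix_elem a b) (continuous_id.matrix_elem c d)

instance : Nonempty (MIdx p t) := ⟨⟨fun _ => 0, by simp⟩⟩

lemma mon_mul_mon (y : Fin p → ℝ) (a b : MIdx p t) :
    mon y a * mon y b = ∏ j, y j ^ (sIdx a b j) := by
  rw [mon, mon, ← Finset.prod_mul_distrib]
  exact Finset.prod_congr rfl fun j _ => (pow_add _ _ _).symm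

lemma hk_vecMulVec (y : Fin p → ℝ) :
    Hk (p := p) (t := t) (vecMulVec (mon y) (mon y)) := by
  intro a b c d h
  rw [vecMulVec_apply, vecMulVec_apply, mon_mul_mon, mon_mul_mon, h]

theorem key_exists (B N₀ : Matrix (MIdx p t) (MIdx p t) ℝ) (hB : B.PosDef)
    (hN₀ : N₀.PosDef) (hHk₀ : Hk N₀) :
    ∃ ν : (Fin p → ℕ) → ℝ, (momMat p t ν).PosDef ∧
      ∀ y : Fin p → ℝ, mon y ⬝ᵥ (momMat p t ν)⁻¹ *ᵥ mon y = mon y ⬝ᵥ B *ᵥ mon y := by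
  obtain ⟨N, hNW, hNPD, hgrad⟩ := exists_grad_zero hB Hk hk_closed
    (fun hN hH => hk_add_smul hN hH) (fun hH => hk_herm hH) hN₀ hHk₀
  obtain ⟨ν, hν⟩ := hk_exists_nu hNW
  refine ⟨ν, hν ▸ hNPD, fun y => ?_⟩
  have h := hgrad (vecMulVec (mon y) (mon y)) (hk_vecMulVec y)
  rw [trace_mul_vecMulVec, trace_mul_vecMulVec] at h
  rw [hν]
  exact h.symm

/-- Embedding of the `x`-indices into the joint indices. -/
def emb1 (n p t : ℕ) (α : MIdx n t) : JIdx n p t :=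
  ⟨(α.1, fun _ => 0), by simpa using α.2⟩

/-- Embedding of the `y`-indices into the joint indices. -/
def emb2 (n p t : ℕ) (β : MIdx p t) : JIdx n p t :=
  ⟨(fun _ => 0, β.1), by simpa using β.2⟩

lemma emb1_inj : Function.Injective (emb1 n p t) := by
  intro a b h
  exact Subtype.ext (congrArg (fun z => z.val.1) h)

lemma emb2_inj : Function.Injective (emb2 n p t) := by
  intro a b h
  exact Subtype.ext (congrArg (fun z => z.val.2) h)

lemma mon2_emb1 (x : Fin n → ℝ) (y : Fin p → ℝ) (α : MIdx n t) :
    mon2 x y (emb1 n p t α) = mon x α := by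
  simp [mon2, mon, emb1]

lemma mon2_emb2 (x : Fin n → ℝ) (y : Fin p → ℝ) (β : MIdx p t) :
    mon2 x y (emb2 n p t β) = mon y β := by
  simp [mon2, mon, emb2]

/-- The matrix expressing `v(x,y)` as a linear image of `v(y)`, for fixed `x`. -/
def Emat (n p t : ℕ) (x : Fin n → ℝ) : Matrix (JIdx n p t) (MIdx p t) ℝ :=
  fun γ β => if γ.1.2 = β.1 then ∏ i, x i ^ ((γ.1.1 i : ℕ)) else 0

lemma Emat_mulVec (x : Fin n → ℝ) (y : Fin p → ℝ) :
    (Emat n p t x) *ᵥ (mon y) = mon2 x y := by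
  funext γ
  show ∑ β, Emat n p t x γ β * mon y β = mon2 x y γ
  have hβ : (∑ j, ((γ.1.2 j : ℕ))) ≤ t := le_trans (Nat.le_add_left _ _) γ.2
  refine (Finset.sum_eq_single (⟨γ.1.2, hβ⟩ : MIdx p t) ?_ ?_).trans ?_
  · intro b _ hb
    have hne : γ.1.2 ≠ b.1 := fun h => hb (Subtype.ext h.symm)
    unfold Emat
    simp only [if_neg hne, zero_mul]
  · intro h
    exact absurd (Finset.mem_univ _) h
  · simp only [Emat, mon, mon2]
    simp

lemma Emat_mulVec_ne (x : Fin n → ℝ) {v : MIdx p t → ℝ} (hv : v ≠ 0) :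
    Emat n p t x *ᵥ v ≠ 0 := by
  obtain ⟨β₀, hβ₀⟩ := Function.ne_iff.mp hv
  intro h0
  have h1 : (Emat n p t x *ᵥ v) (emb2 n p t β₀) = v β₀ := by
    show ∑ β, Emat n p t x (emb2 n p t β₀) β * v β = v β₀
    refine (Finset.sum_eq_single β₀ ?_ ?_).trans ?_
    · intro b _ hb
      have hne : (emb2 n p t β₀).1.2 ≠ b.1 := by
        intro h
        exact hb (Subtype.ext h.symm)
      rw [Emat]
      simp only [if_neg hne, zero_mul]
    · intro h
      exact absurd (Finset.mem_univ _) h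
    · rw [Emat, emb2]
      simp
  rw [h0] at h1
  exact hβ₀ h1.symm

lemma mon_cont (α : MIdx n t) : Continuous fun x : Fin n → ℝ => mon x α := by
  show Continuous fun x : Fin n → ℝ => ∏ i, x i ^ ((α.1 i : ℕ))
  exact continuous_finset_prod _ fun i _ => (continuous_apply i).pow _

lemma momMatX_eq (μ : Measure ((Fin n → ℝ) × (Fin p → ℝ))) :
    momMatX n t (μ.map Prod.fst)
      = (momMat2 n p t μ).submatrix (emb1 n p t) (emb1 n p t) := by
  ext α β
  show (∫ x', mon x' α * mon x' β ∂(μ.map Prod.fst))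
    = ∫ z, mon2 z.1 z.2 (emb1 n p t α) * mon2 z.1 z.2 (emb1 n p t β) ∂μ
  rw [MeasureTheory.integral_map (f := fun x => mon x α * mon x β) measurable_fst.aemeasurable
    (((mon_cont α).mul (mon_cont β)).aestronglyMeasurable)]
  refine integral_congr_ae (Filter.Eventually.of_forall fun z => ?_)
  simp only [mon2_emb1]

lemma submatrix_emb2_hk (μ : Measure ((Fin n → ℝ) × (Fin p → ℝ))) :
    Hk ((momMat2 n p t μ).submatrix (emb2 n p t) (emb2 n p t)) := by
  have hent : ∀ a b : MIdx p t,
      (momMat2 n p t μ).submatrix (emb2 n p t) (emb2 n p t) a b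
        = ∫ z, ∏ j, z.2 j ^ (sIdx a b j) ∂μ := by
    intro a b
    show (∫ z, mon2 z.1 z.2 (emb2 n p t a) * mon2 z.1 z.2 (emb2 n p t b) ∂μ) = _
    refine integral_congr_ae (Filter.Eventually.of_forall fun z => ?_)
    simp only [mon2_emb2, mon_mul_mon]
  intro a b c d h
  rw [hent, hent, h]

end StmtAux

open StmtAux in
/-- Multivariate conditioning: if `μ` is a Borel measure on a compact set
`X × Y ⊆ ℝⁿ × ℝᵖ` (`p ≥ 1`) with nonempty interior (so that `M_t(μ)` is positive
definite for all `t`), and `φ` is its marginal on `ℝⁿ`, then for every `x ∈ ℝⁿ` and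
`t ∈ ℕ` there is a real sequence `ν_{x,t}` on `ℕᵖ_{2t}` with positive definite moment
matrix `M_t(ν_{x,t})` (a linear functional on `ℝ[y]_{2t}`, not necessarily having a
representing measure) such that `Λ^μ_t(x,y) = Λ^φ_t(x) · Λ^{ν_{x,t}}_t(y)` for all
`y ∈ ℝᵖ`. -/
theorem stmt9 (n p : ℕ) (hp : 1 ≤ p)
    (X : Set (Fin n → ℝ)) (Y : Set (Fin p → ℝ))
    (hcomp : IsCompact (X ×ˢ Y)) (hint : (interior (X ×ˢ Y)).Nonempty)
    (μ : Measure ((Fin n → ℝ) × (Fin p → ℝ))) [IsFiniteMeasure μ]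
    (hsupp : μ (X ×ˢ Y)ᶜ = 0)
    (hPD : ∀ s : ℕ, (momMat2 n p s μ).PosDef)
    (x : Fin n → ℝ) (t : ℕ) :
    ∃ ν : (Fin p → ℕ) → ℝ,
      (momMat p t ν).PosDef ∧
      ∀ y : Fin p → ℝ,
        CF2 n p t μ x y = CFX n t (μ.map Prod.fst) x * CFseq p t ν y := by
  classical
  have hM2 : (momMat2 n p t μ).PosDef := hPD t
  -- the marginal moment matrix is positive definite
  have hMx : (momMatX n t (μ.map Prod.fst)).PosDef := by
    rw [momMatX_eq μ]
    exact posDef_submatrix' hM2 emb1_inj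
  -- b = Λ^φ_t(x)⁻¹ is positive
  set b : ℝ := mon x ⬝ᵥ (momMatX n t (μ.map Prod.fst))⁻¹ *ᵥ mon x with hb_def
  have hmonx : (mon (t := t) x) ≠ 0 := by
    intro h
    have h0 := congrFun h (⟨fun _ => 0, by simp⟩ : MIdx n t)
    simp only [mon] at h0
    simp at h0
    exact one_ne_zero h0
  have hb : 0 < b := by
    have h := hMx.inv.dotProduct_mulVec_pos hmonx
    rwa [show star (mon x) = mon x from funext fun _ => star_trivial _] at h
  -- the conjugated matrix A and its positivity
  set A : Matrix (MIdx p t) (MIdx p t) ℝ :=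
    (Emat n p t x)ᴴ * (momMat2 n p t μ)⁻¹ * Emat n p t x with hA_def
  have hAPD : A.PosDef := posDef_conj hM2.inv _ (fun v hv => Emat_mulVec_ne x hv)
  have hquad : ∀ y : Fin p → ℝ,
      mon y ⬝ᵥ A *ᵥ mon y = mon2 x y ⬝ᵥ (momMat2 n p t μ)⁻¹ *ᵥ mon2 x y := by
    intro y
    have hET : (Emat n p t x)ᴴ = (Emat n p t x)ᵀ := by
      ext γ β
      simp [conjTranspose_apply]
    rw [hA_def, ← Matrix.mulVec_mulVec, ← Matrix.mulVec_mulVec,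
      Matrix.dotProduct_mulVec, hET, Matrix.vecMul_transpose, Emat_mulVec]
  -- the base point N₀
  have hN₀PD : ((momMat2 n p t μ).submatrix (emb2 n p t) (emb2 n p t)).PosDef :=
    posDef_submatrix' hM2 emb2_inj
  obtain ⟨ν, hνPD, hνq⟩ := key_exists (b⁻¹ • A) _
    (posDef_smul hAPD (inv_pos.mpr hb)) hN₀PD (submatrix_emb2_hk μ)
  refine ⟨ν, hνPD, fun y => ?_⟩
  have hCF2 : CF2 n p t μ x y
      = (mon2 x y ⬝ᵥ (momMat2 n p t μ)⁻¹ *ᵥ mon2 x y)⁻¹ := rfl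
  have hCFX : CFX n t (μ.map Prod.fst) x = b⁻¹ := rfl
  have hCFseq : CFseq p t ν y = (mon y ⬝ᵥ (momMat p t ν)⁻¹ *ᵥ mon y)⁻¹ := rfl
  rw [hCF2, hCFX, hCFseq, hνq y]
  rw [smul_mulVec, dotProduct_smul, smul_eq_mul, hquad y]
  rw [mul_inv, inv_inv, ← mul_assoc, inv_mul_cancel₀ hb.ne', one_mul]
end
end
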